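/- Let φ_0 : [a,b] → ℝ be an arbitrary continuous function and define the Picard iterates φ_n(t) = λ ∫_a^t K(t,η) φ_{n-1}(η) dη + f(t) for n ≥ 1. Then the sequence (φ_n) converges uniformly on [a,b] to the unique continuous solution of the Volterra integral equation φ(t) = λ ∫_a^t K(t,η) φ(η) dη + f(t). -/

import Mathlib

open MeasureTheory intervalIntegral Set Filter
open Topology

/-- The Picard iterates of the Volterra equation of the second kind:
`φₙ(t) = λ ∫_a^t K(t,η) φ_{n-1}(η) dη + f(t)` for `n ≥ 1`, starting from `φ₀`. -/
noncomputable def picard (K : ℝ → ℝ → ℝ) (f : ℝ → ℝ) (lam a : ℝ) (φ₀ : ℝ → ℝ) :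
    ℕ → ℝ → ℝ
  | 0 => φ₀
  | n + 1 => fun t => lam * (∫ η in a..t, K t η * picard K f lam a φ₀ n η) + f t

lemma exists_ext {X : Type*} [TopologicalSpace X] [NormalSpace X] {s : Set X}
    (hs : IsClosed s) {g : X → ℝ} (hg : ContinuousOn g s) :
    ∃ g' : X → ℝ, Continuous g' ∧ ∀ x ∈ s, g' x = g x := by
  obtain ⟨G, hG⟩ := ContinuousMap.exists_restrict_eq hs
    (⟨s.restrict g, continuousOn_iff_continuous_restrict.mp hg⟩ : C(s, ℝ))
  refine ⟨G, G.continuous, fun x hx => ?_⟩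
  have := congrFun (congrArg ContinuousMap.toFun hG) ⟨x, hx⟩
  exact this

lemma picard_succ_eq (K : ℝ → ℝ → ℝ) (f : ℝ → ℝ) (lam a : ℝ) (φ₀ : ℝ → ℝ) :
    ∀ n, picard K f lam a φ₀ (n+1) = picard K f lam a (picard K f lam a φ₀ 1) n := by
  intro n
  induction n with
  | zero => rfl
  | succ n ih =>
    show (fun t => lam * (∫ η in a..t, K t η * picard K f lam a φ₀ (n+1) η) + f t) = _
    rw [ih]
    rfl
lemma picard_continuous {K : ℝ → ℝ → ℝ} {f : ℝ → ℝ} {lam a : ℝ} {φ₀ : ℝ → ℝ}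
    (hK : Continuous (fun p : ℝ × ℝ => K p.1 p.2)) (hf : Continuous f)
    (hφ₀ : Continuous φ₀) : ∀ n, Continuous (picard K f lam a φ₀ n) := by
  intro n
  induction n with
  | zero => exact hφ₀
  | succ n ih =>
    show Continuous fun t => lam * (∫ η in a..t, K t η * picard K f lam a φ₀ n η) + f t
    refine ((continuous_const.mul ?_).add hf)
    exact continuous_parametric_intervalIntegral_of_continuous
      (f := fun t η => K t η * picard K f lam a φ₀ n η)
      (by exact (hK.comp continuous_id).mul (ih.comp continuous_snd)) continuous_id

lemma key_estimate {a b : ℝ} (hab : a ≤ b) {K : ℝ → ℝ → ℝ} {f : ℝ → ℝ} {lam : ℝ}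
    (hK : Continuous (fun p : ℝ × ℝ => K p.1 p.2)) (hf : Continuous f)
    {M : ℝ} (hM : ∀ p ∈ Icc a b ×ˢ Icc a b, |K (p : ℝ × ℝ).1 p.2| ≤ M)
    {g h : ℝ → ℝ} (hg : Continuous g) (hh : Continuous h)
    {C : ℝ} (hC : 0 ≤ C) (hgh : ∀ t ∈ Icc a b, |g t - h t| ≤ C) :
    ∀ n, ∀ t ∈ Icc a b,
      |picard K f lam a g n t - picard K f lam a h n t| ≤
        C * (|lam| * M) ^ n * (t - a) ^ n / (n.factorial : ℝ) := by
  have hM0 : 0 ≤ M := le_trans (abs_nonneg _) (hM (a, a) (by simp [hab]))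
  intro n
  induction n with
  | zero => intro t ht; simpa [picard] using hgh t ht
  | succ n ih =>
    intro t ht
    obtain ⟨hat, htb⟩ := ht
    set gn := picard K f lam a g n with hgn
    set hn := picard K f lam a h n with hhn
    have hgnc : Continuous gn := picard_continuous hK hf hg n
    have hhnc : Continuous hn := picard_continuous hK hf hh n
    have hKt : Continuous fun η => K t η :=
      hK.comp (continuous_const.prodMk continuous_id)
    have i1 : IntervalIntegrable (fun η => K t η * gn η) volume a t :=
      (hKt.mul hgnc).intervalIntegrable a t
    have i2 : IntervalIntegrable (fun η => K t η * hn η) volume a t :=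
      (hKt.mul hhnc).intervalIntegrable a t
    have hdiff : picard K f lam a g (n+1) t - picard K f lam a h (n+1) t
        = lam * (∫ η in a..t, K t η * (gn η - hn η)) := by
      show lam * (∫ η in a..t, K t η * gn η) + f t
          - (lam * (∫ η in a..t, K t η * hn η) + f t) = _
      have : (∫ η in a..t, K t η * (gn η - hn η))
          = (∫ η in a..t, K t η * gn η) - ∫ η in a..t, K t η * hn η := by
        rw [← intervalIntegral.integral_sub i1 i2]
        exact intervalIntegral.integral_congr fun x _ => by ring
      rw [this]; ring
    rw [hdiff, abs_mul]
    have habs : |∫ η in a..t, K t η * (gn η - hn η)|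
        ≤ ∫ η in a..t, M * (C * (|lam| * M) ^ n * (η - a) ^ n / (n.factorial : ℝ)) := by
      refine le_trans (intervalIntegral.abs_integral_le_integral_abs hat) ?_
      refine intervalIntegral.integral_mono_on hat
        ((hKt.mul (hgnc.sub hhnc)).abs.intervalIntegrable a t) ?_ ?_
      · apply Continuous.intervalIntegrable; fun_prop
      · intro x hx
        have hxab : x ∈ Icc a b := ⟨hx.1, hx.2.trans htb⟩
        rw [abs_mul]
        have h1 : |K t x| ≤ M := hM (t, x) ⟨⟨hat, htb⟩, hxab⟩
        have h2 : |gn x - hn x| ≤ C * (|lam| * M) ^ n * (x - a) ^ n / (n.factorial : ℝ) :=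
          ih x hxab
        exact mul_le_mul h1 h2 (abs_nonneg _) hM0
    have hint : (∫ η in a..t, M * (C * (|lam| * M) ^ n * (η - a) ^ n / (n.factorial : ℝ)))
        = M * (C * (|lam| * M) ^ n / (n.factorial : ℝ)) * ((t - a) ^ (n+1) / (n+1)) := by
      have : ∀ η : ℝ, M * (C * (|lam| * M) ^ n * (η - a) ^ n / (n.factorial : ℝ))
          = (M * (C * (|lam| * M) ^ n / (n.factorial : ℝ))) * (η - a) ^ n := fun η => by ring
      simp_rw [this]
      rw [intervalIntegral.integral_const_mul]
      congr 1
      have := intervalIntegral.integral_comp_sub_right (a := a) (b := t) (fun x => x ^ n) a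
      rw [this, sub_self, integral_pow]
      simp
    have hfact : ((n+1).factorial : ℝ) = (n+1) * (n.factorial : ℝ) := by
      rw [Nat.factorial_succ]; push_cast; ring
    calc |lam| * |∫ η in a..t, K t η * (gn η - hn η)|
        ≤ |lam| * (M * (C * (|lam| * M) ^ n / (n.factorial : ℝ)) * ((t - a) ^ (n+1) / (n+1))) := by
          rw [← hint]
          exact mul_le_mul_of_nonneg_left habs (abs_nonneg _)
      _ = C * (|lam| * M) ^ (n+1) * (t - a) ^ (n+1) / ((n+1).factorial : ℝ) := by
          rw [hfact, pow_succ]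
          have hn1 : ((n:ℝ)+1) ≠ 0 := by positivity
          have hnf : (n.factorial : ℝ) ≠ 0 := by positivity
          field_simp
          ring

/-- **Convergence of Picard iterates** (continuous case `T = ℝ`): starting from an
arbitrary continuous `φ₀`, the Picard iterates converge uniformly on `[a,b]` to the
unique continuous solution of `φ(t) = λ ∫_a^t K(t,η) φ(η) dη + f(t)`. -/
theorem picard_tendsto_unique_solution
    (a b : ℝ) (hab : a < b) (K : ℝ → ℝ → ℝ) (f : ℝ → ℝ) (lam : ℝ)
    (hK : ContinuousOn (fun p : ℝ × ℝ => K p.1 p.2)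
      {p : ℝ × ℝ | a ≤ p.2 ∧ p.2 ≤ p.1 ∧ p.1 ≤ b})
    (hf : ContinuousOn f (Set.Icc a b))
    (φ₀ : ℝ → ℝ) (hφ₀ : ContinuousOn φ₀ (Set.Icc a b)) :
    ∃ φ : ℝ → ℝ,
      (ContinuousOn φ (Set.Icc a b) ∧
        ∀ t ∈ Set.Icc a b, φ t = lam * (∫ η in a..t, K t η * φ η) + f t) ∧
      (∀ ψ : ℝ → ℝ, ContinuousOn ψ (Set.Icc a b) →
        (∀ t ∈ Set.Icc a b, ψ t = lam * (∫ η in a..t, K t η * ψ η) + f t) →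
        Set.EqOn ψ φ (Set.Icc a b)) ∧
      TendstoUniformlyOn (fun n : ℕ => picard K f lam a φ₀ n) φ atTop (Set.Icc a b) := by
  have hab' : a ≤ b := hab.le
  -- the domain Ω is closed
  have hΩ : IsClosed {p : ℝ × ℝ | a ≤ p.2 ∧ p.2 ≤ p.1 ∧ p.1 ≤ b} := by
    have : {p : ℝ × ℝ | a ≤ p.2 ∧ p.2 ≤ p.1 ∧ p.1 ≤ b}
        = {p : ℝ × ℝ | a ≤ p.2} ∩ ({p : ℝ × ℝ | p.2 ≤ p.1} ∩ {p : ℝ × ℝ | p.1 ≤ b}) := by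
      ext p; simp [and_assoc]
    rw [this]
    exact (isClosed_le continuous_const continuous_snd).inter
      ((isClosed_le continuous_snd continuous_fst).inter
        (isClosed_le continuous_fst continuous_const))
  -- extend the data continuously to all of ℝ (Tietze)
  obtain ⟨K2, hK2c, hK2e⟩ := exists_ext hΩ hK
  obtain ⟨F, hFc, hFe⟩ := exists_ext isClosed_Icc hf
  obtain ⟨Φ, hΦc, hΦe⟩ := exists_ext isClosed_Icc hφ₀
  set Kt : ℝ → ℝ → ℝ := fun t s => K2 (t, s) with hKt
  have hKtc : Continuous fun p : ℝ × ℝ => Kt p.1 p.2 :=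
    hK2c.comp (continuous_fst.prodMk continuous_snd)
  -- a bound for the kernel on the square
  obtain ⟨M, hM⟩ := (isCompact_Icc.prod isCompact_Icc).exists_bound_of_continuousOn
    (s := Icc a b ×ˢ Icc a b) (hKtc.continuousOn)
  have hM' : ∀ p ∈ Icc a b ×ˢ Icc a b, |Kt (p : ℝ × ℝ).1 p.2| ≤ M := by
    intro p hp; simpa [Real.norm_eq_abs] using hM p hp
  have hM0 : 0 ≤ M := le_trans (abs_nonneg _) (hM' (a, a) (by simp [hab']))
  set p' : ℕ → ℝ → ℝ := picard Kt F lam a Φ with hp'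
  have hp'c : ∀ n, Continuous (p' n) := picard_continuous hKtc hFc hΦc
  have hp'succ : ∀ n t, p' (n+1) t = lam * (∫ η in a..t, Kt t η * p' n η) + F t :=
    fun n t => rfl
  -- transfer: extended iterates agree with original iterates on [a,b]
  have htrans : ∀ n, EqOn (picard K f lam a φ₀ n) (p' n) (Icc a b) := by
    intro n
    induction n with
    | zero => exact fun x hx => (hΦe x hx).symm
    | succ n ih =>
      intro x hx
      show lam * (∫ η in a..x, K x η * picard K f lam a φ₀ n η) + f x
          = lam * (∫ η in a..x, Kt x η * p' n η) + F x
      rw [hFe x hx]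
      congr 1
      congr 1
      apply intervalIntegral.integral_congr
      rw [uIcc_of_le hx.1]
      intro η hη
      have hηab : η ∈ Icc a b := ⟨hη.1, hη.2.trans hx.2⟩
      show K x η * picard K f lam a φ₀ n η = Kt x η * p' n η
      have h9 : Kt x η = K x η := hK2e (x, η) ⟨hη.1, hη.2, hx.2⟩
      rw [h9, ih hηab]
  -- the consecutive differences and their bound
  obtain ⟨C₀, hC₀⟩ := isCompact_Icc.exists_bound_of_continuousOn
    (s := Icc a b) (((hp'c 1).sub (hp'c 0)).continuousOn)
  have hC₀' : ∀ x ∈ Icc a b, |p' 1 x - p' 0 x| ≤ C₀ := by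
    intro x hx; simpa [Real.norm_eq_abs] using hC₀ x hx
  have hC₀0 : 0 ≤ C₀ := le_trans (abs_nonneg _) (hC₀' a (by simp [hab']))
  set d : ℕ → ℝ → ℝ := fun n x => p' (n+1) x - p' n x with hd
  have hus : Summable (fun n : ℕ => C₀ * ((|lam| * M * (b - a)) ^ n / (n.factorial : ℝ))) :=
    (Real.summable_pow_div_factorial (|lam| * M * (b - a))).mul_left C₀
  have hdb : ∀ n, ∀ x ∈ Icc a b, |d n x| ≤ C₀ * (|lam| * M) ^ n * (x - a) ^ n / (n.factorial : ℝ) := by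
    intro n x hx
    have h1 : p' (n+1) = picard Kt F lam a (p' 1) n := picard_succ_eq Kt F lam a Φ n
    have := key_estimate (K := Kt) (f := F) (lam := lam) hab' hKtc hFc hM'
      (g := p' 1) (h := Φ) (picard_continuous hKtc hFc hΦc 1) hΦc hC₀0 hC₀' n x hx
    rw [hd]
    simp only []
    rw [h1]
    exact this
  have hdb' : ∀ n, ∀ x, x ∈ Icc a b →
      ‖d n x‖ ≤ C₀ * ((|lam| * M * (b - a)) ^ n / (n.factorial : ℝ)) := by
    intro n x hx
    refine le_trans (by simpa [Real.norm_eq_abs] using hdb n x hx) ?_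
    have hxa : (0:ℝ) ≤ x - a := sub_nonneg.mpr hx.1
    have hpow : (x - a) ^ n ≤ (b - a) ^ n := pow_le_pow_left₀ hxa (by linarith [hx.2]) n
    have h8 : C₀ * (|lam| * M) ^ n * (x - a) ^ n / (n.factorial : ℝ)
        ≤ C₀ * (|lam| * M) ^ n * (b - a) ^ n / (n.factorial : ℝ) := by
      gcongr
    refine h8.trans (le_of_eq ?_)
    rw [show (|lam| * M * (b - a)) ^ n = (|lam| * M) ^ n * (b - a) ^ n from mul_pow _ _ _]
    ring
  -- uniform convergence of the series of differences
  set S : ℝ → ℝ := fun x => ∑' n, d n x with hS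
  have huc : TendstoUniformlyOn (fun N x => ∑ n ∈ Finset.range N, d n x) S atTop (Icc a b) :=
    tendstoUniformlyOn_tsum_nat hus hdb'
  set φ : ℝ → ℝ := fun x => Φ x + S x with hφdef
  have htel : ∀ N x, p' N x = Φ x + ∑ n ∈ Finset.range N, d n x := by
    intro N x
    rw [hd]
    simp only []
    rw [Finset.sum_range_sub (fun n => p' n x)]
    have : p' 0 x = Φ x := rfl
    rw [this]; ring
  have hconv' : TendstoUniformlyOn (fun N => p' N) φ atTop (Icc a b) := by
    rw [Metric.tendstoUniformlyOn_iff] at huc ⊢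
    intro ε hε
    filter_upwards [huc ε hε] with N hN x hx
    have h2 := hN x hx
    rw [Real.dist_eq] at h2 ⊢
    have : φ x - p' N x = S x - ∑ n ∈ Finset.range N, d n x := by
      rw [htel N x, hφdef]; ring
    rw [this]
    exact h2
  have hφcont : ContinuousOn φ (Icc a b) :=
    hconv'.continuousOn (Frequently.of_forall fun n => (hp'c n).continuousOn)
  -- φ satisfies the (extended) integral equation
  have hφeq' : ∀ t ∈ Icc a b, φ t = lam * (∫ η in a..t, Kt t η * φ η) + F t := by
    intro t ht
    have hlim1 : Tendsto (fun n => p' (n+1) t) atTop (𝓝 (φ t)) :=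
      (hconv'.tendsto_at ht).comp (tendsto_add_atTop_nat 1)
    have hKtt : Continuous fun η => Kt t η := hK2c.comp (continuous_const.prodMk continuous_id)
    have hφint : IntervalIntegrable (fun η => Kt t η * φ η) volume a t := by
      apply ContinuousOn.intervalIntegrable
      rw [uIcc_of_le ht.1]
      exact hKtt.continuousOn.mul (hφcont.mono (Icc_subset_Icc_right ht.2))
    have hlim2 : Tendsto (fun n => ∫ η in a..t, Kt t η * p' n η) atTop
        (𝓝 (∫ η in a..t, Kt t η * φ η)) := by
      rw [Metric.tendsto_atTop]
      intro ε hε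
      set ε' : ℝ := ε / (M * (b - a) + 1) with hε'
      have hbapos : (0:ℝ) < M * (b - a) + 1 := by nlinarith
      have hε'pos : 0 < ε' := div_pos hε hbapos
      obtain ⟨N, hN⟩ := eventually_atTop.mp
        ((Metric.tendstoUniformlyOn_iff.mp hconv') ε' hε'pos)
      refine ⟨N, fun n hn => ?_⟩
      have hin : IntervalIntegrable (fun η => Kt t η * p' n η) volume a t :=
        (hKtt.mul (hp'c n)).intervalIntegrable a t
      rw [Real.dist_eq, ← intervalIntegral.integral_sub hin hφint]
      have hptw : ∀ x ∈ Set.uIoc a t, ‖Kt t x * p' n x - Kt t x * φ x‖ ≤ M * ε' := by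
        intro x hx
        rw [uIoc_of_le ht.1] at hx
        have hxab : x ∈ Icc a b := ⟨hx.1.le, hx.2.trans ht.2⟩
        have h1 : |Kt t x| ≤ M := hM' (t, x) ⟨ht, hxab⟩
        have h2 : |p' n x - φ x| ≤ ε' := by
          rw [abs_sub_comm, ← Real.dist_eq]
          exact (hN n hn x hxab).le
        rw [← mul_sub, Real.norm_eq_abs, abs_mul]
        exact mul_le_mul h1 h2 (abs_nonneg _) hM0
      have hb1 := intervalIntegral.norm_integral_le_of_norm_le_const hptw
      rw [Real.norm_eq_abs] at hb1
      refine lt_of_le_of_lt hb1 ?_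
      have hta : |t - a| = t - a := abs_of_nonneg (sub_nonneg.mpr ht.1)
      rw [hta]
      have h3 : M * ε' * (t - a) ≤ ε' * (M * (b - a)) := by
        have h5 : t - a ≤ b - a := by linarith [ht.2]
        have h6 := mul_le_mul_of_nonneg_left h5 (mul_nonneg hM0 hε'pos.le)
        nlinarith [h6]
      have h4 : ε' * (M * (b - a) + 1) = ε := by
        rw [hε']; field_simp
      nlinarith [hε'pos]
    have hlim2' : Tendsto (fun n => lam * (∫ η in a..t, Kt t η * p' n η) + F t) atTop
        (𝓝 (lam * (∫ η in a..t, Kt t η * φ η) + F t)) :=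
      ((hlim2.const_mul lam).add_const (F t))
    have : (fun n => p' (n+1) t) = fun n => lam * (∫ η in a..t, Kt t η * p' n η) + F t := by
      funext n; exact hp'succ n t
    rw [this] at hlim1
    exact tendsto_nhds_unique hlim1 hlim2'
  -- translate the equation back to the original data
  have hinteq : ∀ g : ℝ → ℝ, ∀ t ∈ Icc a b, (∀ x ∈ Icc a b, True) →
      (∫ η in a..t, Kt t η * g η) = ∫ η in a..t, K t η * g η := by
    intro g t ht _
    apply intervalIntegral.integral_congr
    rw [uIcc_of_le ht.1]
    intro η hη
    show Kt t η * g η = K t η * g η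
    have h9 : Kt t η = K t η := hK2e (t, η) ⟨hη.1, hη.2, ht.2⟩
    rw [h9]
  have hφeq : ∀ t ∈ Icc a b, φ t = lam * (∫ η in a..t, K t η * φ η) + f t := by
    intro t ht
    rw [hφeq' t ht, hinteq φ t ht (fun _ _ => trivial), hFe t ht]
  refine ⟨φ, ⟨hφcont, hφeq⟩, ?_, ?_⟩
  · -- uniqueness
    intro ψ hψc hψeq t ht
    obtain ⟨Ψ, hΨc, hΨe⟩ := exists_ext isClosed_Icc hψc
    have hfix : ∀ n, ∀ x ∈ Icc a b, picard Kt F lam a Ψ n x = ψ x := by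
      intro n
      induction n with
      | zero => exact hΨe
      | succ n ih =>
        intro x hx
        show lam * (∫ η in a..x, Kt x η * picard Kt F lam a Ψ n η) + F x = ψ x
        rw [hψeq x hx, hFe x hx]
        congr 1
        congr 1
        apply intervalIntegral.integral_congr
        rw [uIcc_of_le hx.1]
        intro η hη
        have hηab : η ∈ Icc a b := ⟨hη.1, hη.2.trans hx.2⟩
        show Kt x η * picard Kt F lam a Ψ n η = K x η * ψ η
        have h9 : Kt x η = K x η := hK2e (x, η) ⟨hη.1, hη.2, hx.2⟩
        rw [h9, ih η hηab]
    obtain ⟨C', hC'⟩ := isCompact_Icc.exists_bound_of_continuousOn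
      (s := Icc a b) ((hΦc.sub hΨc).continuousOn)
    have hC'' : ∀ x ∈ Icc a b, |Φ x - Ψ x| ≤ C' := by
      intro x hx; simpa [Real.norm_eq_abs] using hC' x hx
    have hC'0 : 0 ≤ C' := le_trans (abs_nonneg _) (hC'' a (by simp [hab']))
    have hkey := key_estimate (K := Kt) (f := F) (lam := lam) hab' hKtc hFc hM' (g := Φ) (h := Ψ) hΦc hΨc hC'0 hC''
    have hbound : ∀ n, |p' n t - ψ t| ≤ C' * ((|lam| * M * (b - a)) ^ n / (n.factorial : ℝ)) := by
      intro n
      have h1 : picard Kt F lam a Ψ n t = ψ t := hfix n t ht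
      have := hkey n t ht
      rw [h1] at this
      refine this.trans ?_
      have hxa : (0:ℝ) ≤ t - a := sub_nonneg.mpr ht.1
      have hpow : (t - a) ^ n ≤ (b - a) ^ n := pow_le_pow_left₀ hxa (by linarith [ht.2]) n
      have h2 : C' * (|lam| * M) ^ n * (t - a) ^ n / (n.factorial : ℝ)
          ≤ C' * (|lam| * M) ^ n * (b - a) ^ n / (n.factorial : ℝ) := by gcongr
      refine h2.trans (le_of_eq ?_)
      rw [show (|lam| * M * (b - a)) ^ n = (|lam| * M) ^ n * (b - a) ^ n from mul_pow _ _ _]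
      ring
    have hv0 : Tendsto (fun n => C' * ((|lam| * M * (b - a)) ^ n / (n.factorial : ℝ))) atTop (𝓝 0) :=
      ((Real.summable_pow_div_factorial (|lam| * M * (b - a))).mul_left C').tendsto_atTop_zero
    have habs0 : Tendsto (fun n => |p' n t - ψ t|) atTop (𝓝 0) :=
      squeeze_zero (fun n => abs_nonneg _) hbound hv0
    have h1 : Tendsto (fun n => p' n t) atTop (𝓝 (ψ t)) := by
      rw [tendsto_iff_dist_tendsto_zero]
      simpa [Real.dist_eq] using habs0
    exact tendsto_nhds_unique h1 (hconv'.tendsto_at ht)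
  · -- uniform convergence of the original iterates
    exact hconv'.congr (Eventually.of_forall fun n => (htrans n).symm)
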